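/- Suppose each fⱼ(x) = (1/2)xᵀAⱼx + Bⱼx with Aⱼ symmetric positive semidefinite and ΣⱼAⱼ positive definite, and W column stochastic with positive diagonal inducing a strongly connected graph with right eigenvector π (positive entries). Then for any α ∈ (0, min_k 2nπₖ/λ_max(Aₖ)), the linear map L_α with (L_α x)ₖ = Σⱼ Wₖⱼ(I - (α/(nπⱼ))Aⱼ)xⱼ satisfies sup_{x≠0} ‖L_α x‖_{π⊗1_d}/‖x‖_{π⊗1_d} < 1. -/

import Mathlib

open scoped Matrix

open Finset in
lemma key_step {d : ℕ} (B : Matrix (Fin d) (Fin d) ℝ) (hB : B.PosSemidef)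
    (lam t : ℝ) (hmax : ∀ μ ∈ spectrum ℝ B, μ ≤ lam) (ht : 0 < t) (htlam : t * lam < 2)
    (y : Fin d → ℝ) :
    (∑ i, (y i - t * B.mulVec y i)^2 ≤ ∑ i, (y i)^2) ∧
    (∑ i, (y i - t * B.mulVec y i)^2 = ∑ i, (y i)^2 → B.mulVec y = 0) := by
  classical
  have hH := hB.isHermitian
  set U : Matrix (Fin d) (Fin d) ℝ := (hH.eigenvectorUnitary : Matrix (Fin d) (Fin d) ℝ) with hU
  set D : Matrix (Fin d) (Fin d) ℝ := Matrix.diagonal hH.eigenvalues with hD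
  have hUU : star U * U = 1 := Unitary.coe_star_mul_self hH.eigenvectorUnitary
  have hBdiag : B = U * D * star U := by
    have := hH.spectral_theorem
    rwa [RCLike.ofReal_real_eq_id, Function.id_comp] at this
  have hsq : B * B = U * (D * D) * star U := by
    rw [hBdiag]
    simp only [Matrix.mul_assoc]
    rw [← Matrix.mul_assoc (star U) U, hUU, Matrix.one_mul]
  have hsm : lam • B = U * (lam • D) * star U := by
    rw [hBdiag, Matrix.mul_smul, Matrix.smul_mul]
  have hDD : lam • D - D * D
      = Matrix.diagonal (fun i => lam * hH.eigenvalues i - hH.eigenvalues i * hH.eigenvalues i) := by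
    rw [hD, Matrix.diagonal_mul_diagonal, ← Matrix.diagonal_smul, ← Matrix.diagonal_sub]
    congr 1
  have hM : (lam • B - B * B).PosSemidef := by
    have heq : lam • B - B * B
        = U * Matrix.diagonal (fun i => lam * hH.eigenvalues i - hH.eigenvalues i * hH.eigenvalues i) * Uᴴ := by
      rw [hsq, hsm, ← Matrix.star_eq_conjTranspose, ← hDD, Matrix.mul_sub, Matrix.sub_mul]
    rw [heq]
    refine Matrix.PosSemidef.mul_mul_conjTranspose_same ?_ U
    refine Matrix.posSemidef_diagonal_iff.mpr fun i => ?_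
    have h1 : 0 ≤ hH.eigenvalues i := hB.eigenvalues_nonneg i
    have h2 : hH.eigenvalues i ≤ lam := hmax _ (hH.eigenvalues_mem_spectrum_real i)
    nlinarith
  set z := B.mulVec y with hz
  have hp : 0 ≤ ∑ i, y i * z i := by
    have := hB.dotProduct_mulVec_nonneg y
    simpa [dotProduct, hz] using this
  have hq : ∑ i, (z i)^2 ≤ lam * ∑ i, y i * z i := by
    have h0 := hM.dotProduct_mulVec_nonneg y
    have hyz : y ⬝ᵥ ((B * B) *ᵥ y) = ∑ i, (z i)^2 := by
      rw [← Matrix.mulVec_mulVec, Matrix.dotProduct_mulVec]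
      have hvm : Matrix.vecMul y B = z := by
        rw [← Matrix.mulVec_transpose]
        have : Bᵀ = B := by
          have := hH.eq
          rwa [← Matrix.star_eq_conjTranspose] at this  -- maybe wrong direction
        rw [this]
      rw [hvm]
      simp [dotProduct, sq, ← hz]
    have h1 : (0:ℝ) ≤ lam * (∑ i, y i * z i) - ∑ i, (z i)^2 := by
      have hstar : star y = y := by simp
      rw [Matrix.sub_mulVec, Matrix.smul_mulVec, dotProduct_sub,
        dotProduct_smul, hstar] at h0
      have hyBy : y ⬝ᵥ (B *ᵥ y) = ∑ i, y i * z i := by simp [dotProduct, hz]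
      rw [hyBy, hyz] at h0
      simpa using h0
    linarith
  have expand : ∑ i, (y i - t * z i)^2
      = ∑ i, (y i)^2 - 2*t*(∑ i, y i * z i) + t^2*(∑ i, (z i)^2) := by
    rw [Finset.mul_sum, Finset.mul_sum, ← Finset.sum_sub_distrib, ← Finset.sum_add_distrib]
    exact Finset.sum_congr rfl fun i _ => by ring
  have h3 : 0 < 2*t - t^2*lam := by nlinarith [mul_pos ht (sub_pos.mpr htlam)]
  constructor
  · rw [expand]
    nlinarith [mul_le_mul_of_nonneg_left hq (sq_nonneg t), mul_nonneg h3.le hp]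
  · intro heq
    rw [expand] at heq
    have hp0 : ∑ i, y i * z i = 0 := by
      refine le_antisymm ?_ hp
      nlinarith [mul_le_mul_of_nonneg_left hq (sq_nonneg t)]
    have := (hB.dotProduct_mulVec_zero_iff y).mp ?_
    · exact this
    · have hstar : star y = y := by simp
      rw [hstar]
      simpa [dotProduct, hz] using hp0

lemma sum_sq_identity {n d : ℕ} (w : Fin n → ℝ) (u : Fin n → Fin d → ℝ) (s : ℝ)
    (hw : ∑ j, w j = s) :
    ∑ i, (∑ j, w j * u j i)^2
      = s * (∑ j, w j * (∑ i, (u j i)^2))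
        - (1/2) * ∑ j, ∑ j', (w j * w j') * (∑ i, (u j i - u j' i)^2) := by
  classical
  have h1 : ∀ i, ∑ j, ∑ j', (w j * w j') * (u j i - u j' i)^2
      = 2 * s * (∑ j, w j * (u j i)^2) - 2 * (∑ j, w j * u j i)^2 := by
    intro i
    have e : ∀ j : Fin n, ∑ j', (w j * w j') * (u j i - u j' i)^2
        = (w j * (u j i)^2) * s - (w j * u j i) * (2 * ∑ j', w j' * u j' i)
          + w j * (∑ j', w j' * (u j' i)^2) := by
      intro j
      rw [← hw]
      simp only [Finset.mul_sum, Finset.sum_mul]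
      rw [← Finset.sum_sub_distrib, ← Finset.sum_add_distrib]
      exact Finset.sum_congr rfl fun j' _ => by ring
    rw [Finset.sum_congr rfl fun j _ => e j]
    rw [Finset.sum_add_distrib, Finset.sum_sub_distrib, ← Finset.sum_mul, ← Finset.sum_mul,
      ← Finset.sum_mul, hw]
    ring
  have h2 : ∑ j, ∑ j', (w j * w j') * (∑ i, (u j i - u j' i)^2)
      = ∑ i, ∑ j, ∑ j', (w j * w j') * (u j i - u j' i)^2 := by
    simp only [Finset.mul_sum]
    calc ∑ j, ∑ j', ∑ i, (w j * w j') * (u j i - u j' i)^2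
        = ∑ j, ∑ i, ∑ j', (w j * w j') * (u j i - u j' i)^2 :=
          Finset.sum_congr rfl fun j _ => Finset.sum_comm
      _ = ∑ i, ∑ j, ∑ j', (w j * w j') * (u j i - u j' i)^2 := Finset.sum_comm
  have h1' : ∑ i, ∑ j, ∑ j', (w j * w j') * (u j i - u j' i)^2
      = 2*s*(∑ i, ∑ j, w j * (u j i)^2) - 2 * ∑ i, (∑ j, w j * u j i)^2 := by
    rw [Finset.sum_congr rfl fun i _ => h1 i, Finset.sum_sub_distrib,
      ← Finset.mul_sum, ← Finset.mul_sum]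
  have h3 : (∑ j, w j * ∑ i, (u j i)^2) = ∑ i, ∑ j, w j * (u j i)^2 := by
    simp only [Finset.mul_sum]
    exact Finset.sum_comm
  rw [h2, h1', h3]
  ring

theorem stmt_8 {n d : ℕ} (hn : 0 < n)
    (A : Fin n → Matrix (Fin d) (Fin d) ℝ)
    (lam : Fin n → ℝ)
    (W : Matrix (Fin n) (Fin n) ℝ) (π : Fin n → ℝ) (α : ℝ)
    (hA : ∀ j, (A j).PosSemidef)
    (hAsum : (∑ j, A j).PosDef)
    (hlam_mem : ∀ j, lam j ∈ spectrum ℝ (A j))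
    (hlam_max : ∀ j, ∀ μ ∈ spectrum ℝ (A j), μ ≤ lam j)
    (hW_nonneg : ∀ i j, 0 ≤ W i j)
    (hW_col : ∀ j, ∑ k, W k j = 1)
    (hW_diag : ∀ j, 0 < W j j)
    (hW_conn : ∀ i j : Fin n, Relation.ReflTransGen (fun a b => 0 < W b a) i j)
    (hπ_pos : ∀ k, 0 < π k)
    (hπ_sum : ∑ k, π k = 1)
    (hπ_eig : ∀ k, ∑ j, W k j * π j = π k)
    (hα0 : 0 < α) (hα : α < ⨅ k, 2 * n * π k / lam k) :
    ∃ η : ℝ, η < 1 ∧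
      ∀ x : Fin n → (Fin d → ℝ),
        Real.sqrt (∑ k, (1 / π k) *
            (∑ i, (∑ j, W k j * (x j i - (α / (n * π j)) * (A j).mulVec (x j) i)) ^ 2)) ≤
          η * Real.sqrt (∑ k, (1 / π k) * (∑ i, (x k i) ^ 2)) := by
  classical
  -- dispose of the degenerate case d = 0
  rcases Nat.eq_zero_or_pos d with hd | hd
  · subst hd
    haveI : Subsingleton (Matrix (Fin 0) (Fin 0) ℝ) :=
      ⟨fun a b => Matrix.ext fun i _ => i.elim0⟩
    have h := hlam_mem ⟨0, hn⟩
    rw [spectrum.mem_iff] at h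
    exact absurd (isUnit_of_subsingleton _) h
  have hn' : (0:ℝ) < n := by exact_mod_cast hn
  have hd' : (0:ℝ) < d := by exact_mod_cast hd
  have hπne : ∀ k, π k ≠ 0 := fun k => (hπ_pos k).ne'
  -- basic facts on lam and the stepsizes
  have hαj : ∀ j, α < 2 * n * π j / lam j :=
    fun j => lt_of_lt_of_le hα (ciInf_le (Finite.bddBelow_range _) j)
  have hlam_pos : ∀ j, 0 < lam j := by
    intro j
    by_contra h
    push_neg at h
    have h2 : (0:ℝ) ≤ 2 * n * π j := mul_nonneg (by positivity) (hπ_pos j).le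
    have := div_nonpos_of_nonneg_of_nonpos h2 h
    linarith [hαj j]
  have ht : ∀ j, 0 < α / (↑n * π j) := fun j => div_pos hα0 (mul_pos hn' (hπ_pos j))
  have htl : ∀ j, (α / (↑n * π j)) * lam j < 2 := by
    intro j
    rw [div_mul_eq_mul_div, div_lt_iff₀ (mul_pos hn' (hπ_pos j))]
    have h := hαj j
    rw [lt_div_iff₀ (hlam_pos j)] at h
    nlinarith [hπ_pos j]
  -- abbreviations
  set NN : (Fin n → Fin d → ℝ) → ℝ := fun x => ∑ k, (1 / π k) * (∑ i, (x k i)^2) with hNN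
  set QQ : (Fin n → Fin d → ℝ) → ℝ := fun x => ∑ k, (1 / π k) *
      (∑ i, (∑ j, W k j * (x j i - (α / (n * π j)) * (A j).mulVec (x j) i)) ^ 2) with hQQ
  have hNN_nonneg : ∀ x, 0 ≤ NN x := fun x =>
    Finset.sum_nonneg fun k _ => mul_nonneg (one_div_pos.mpr (hπ_pos k)).le
      (Finset.sum_nonneg fun i _ => sq_nonneg _)
  have hNN0 : ∀ x, NN x = 0 → x = 0 := by
    intro x hx
    have h1 := (Finset.sum_eq_zero_iff_of_nonneg (fun k _ =>
      mul_nonneg (one_div_pos.mpr (hπ_pos k)).le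
      (Finset.sum_nonneg fun i _ => sq_nonneg _))).mp hx
    funext k i
    have h2 := h1 k (Finset.mem_univ k)
    have h3 : ∑ i, (x k i)^2 = 0 := by
      rcases mul_eq_zero.mp h2 with h | h
      · exact absurd h (one_div_ne_zero (hπne k))
      · exact h
    have h4 := (Finset.sum_eq_zero_iff_of_nonneg (fun i _ => sq_nonneg _)).mp h3 i
      (Finset.mem_univ i)
    exact (pow_eq_zero_iff two_ne_zero).mp h4
  -- the strict pointwise inequality
  have hstrict : ∀ x : Fin n → Fin d → ℝ, x ≠ 0 → QQ x < NN x := by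
    intro x hx
    set y : Fin n → Fin d → ℝ :=
      fun j i => x j i - α / (↑n * π j) * (A j).mulVec (x j) i with hy
    set u : Fin n → Fin d → ℝ := fun j i => y j i / π j with hu
    have hkey := fun j =>
      key_step (A j) (hA j) (lam j) (α / (↑n * π j)) (hlam_max j) (ht j) (htl j) (x j)
    have hWy : ∀ k i, ∑ j, W k j * (x j i - α / (↑n * π j) * (A j).mulVec (x j) i)
        = ∑ j, (W k j * π j) * u j i := by
      intro k i
      refine Finset.sum_congr rfl fun j _ => ?_
      show W k j * y j i = (W k j * π j) * (y j i / π j)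
      have := hπne j
      field_simp
    set N' : ℝ := ∑ j, (1 / π j) * ∑ i, (y j i)^2 with hN'
    set Dtot : ℝ := ∑ k, (1 / π k) * ((1/2) * ∑ j, ∑ j',
      ((W k j * π j) * (W k j' * π j')) * (∑ i, (u j i - u j' i)^2)) with hDtot
    have hQQx : QQ x = N' - Dtot := by
      have e1 : ∀ k, (1 / π k) *
          (∑ i, (∑ j, W k j * (x j i - (α / (n * π j)) * (A j).mulVec (x j) i)) ^ 2)
          = (∑ j, (W k j * π j) * (∑ i, (u j i)^2))
            - (1 / π k) * ((1/2) * ∑ j, ∑ j',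
              ((W k j * π j) * (W k j' * π j')) * (∑ i, (u j i - u j' i)^2)) := by
        intro k
        have e0 : (∑ i, (∑ j, W k j * (x j i - (α / (n * π j)) * (A j).mulVec (x j) i)) ^ 2)
            = ∑ i, (∑ j, (W k j * π j) * u j i)^2 :=
          Finset.sum_congr rfl fun i _ => by rw [hWy k i]
        rw [e0, sum_sq_identity _ _ _ (hπ_eig k)]
        have := hπne k
        field_simp
      have e2 : ∑ k, ∑ j, (W k j * π j) * (∑ i, (u j i)^2) = N' := by
        rw [Finset.sum_comm]
        refine Finset.sum_congr rfl fun j _ => ?_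
        simp_rw [mul_assoc]
        rw [← Finset.sum_mul, hW_col j, one_mul]
        have : ∑ i, (u j i)^2 = (∑ i, (y j i)^2) / (π j)^2 := by
          rw [Finset.sum_congr rfl fun (i : Fin d) _ =>
            (by rw [hu, div_pow] : (u j i)^2 = (y j i)^2 / (π j)^2), ← Finset.sum_div]
        have halg : ∀ S : ℝ, π j * (S / (π j)^2) = 1/π j * S := by
          intro S
          have := hπne j
          field_simp
        rw [this, halg]
      simp only [hQQ]
      rw [Finset.sum_congr rfl fun k _ => e1 k, Finset.sum_sub_distrib, e2, ← hDtot]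
    have hterm_nonneg : ∀ (k j j' : Fin n),
        0 ≤ ((W k j * π j) * (W k j' * π j')) * (∑ i, (u j i - u j' i)^2) :=
      fun k j j' => mul_nonneg
        (mul_nonneg (mul_nonneg (hW_nonneg k j) (hπ_pos j).le)
          (mul_nonneg (hW_nonneg k j') (hπ_pos j').le))
        (Finset.sum_nonneg fun i _ => sq_nonneg _)
    have hDk_nonneg : ∀ k, 0 ≤ (1 / π k) * ((1/2) * ∑ j, ∑ j',
        ((W k j * π j) * (W k j' * π j')) * (∑ i, (u j i - u j' i)^2)) := by
      intro k
      refine mul_nonneg (one_div_pos.mpr (hπ_pos k)).le (mul_nonneg (by norm_num) ?_)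
      exact Finset.sum_nonneg fun j _ => Finset.sum_nonneg fun j' _ => hterm_nonneg k j j'
    have hD_nonneg : 0 ≤ Dtot := Finset.sum_nonneg fun k _ => hDk_nonneg k
    have hN'le : N' ≤ NN x := by
      refine Finset.sum_le_sum fun j _ => ?_
      exact mul_le_mul_of_nonneg_left (hkey j).1 (one_div_pos.mpr (hπ_pos j)).le
    by_contra hcon
    push_neg at hcon
    rw [hQQx] at hcon
    have hD0 : Dtot = 0 := le_antisymm (by linarith) hD_nonneg
    have hN'eq : N' = NN x := le_antisymm hN'le (by linarith)
    -- each block is norm-preserved, hence A_j x_j = 0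
    have hjeq : ∀ j, ∑ i, (y j i)^2 = ∑ i, (x j i)^2 := by
      intro j
      by_contra hne
      have hlt : ∑ i, (y j i)^2 < ∑ i, (x j i)^2 := lt_of_le_of_ne (hkey j).1 hne
      have : N' < NN x := by
        refine Finset.sum_lt_sum (fun j _ => mul_le_mul_of_nonneg_left (hkey j).1
          (one_div_pos.mpr (hπ_pos j)).le) ⟨j, Finset.mem_univ j, ?_⟩
        exact mul_lt_mul_of_pos_left hlt (one_div_pos.mpr (hπ_pos j))
      linarith [hN'eq]
    have hAx0 : ∀ j, (A j).mulVec (x j) = 0 := fun j => (hkey j).2 (hjeq j)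
    have hyx : ∀ j, y j = x j := by
      intro j
      funext i
      rw [hy]
      simp [hAx0 j]
    -- all terms in Dtot vanish
    have hterm0 : ∀ k j j',
        ((W k j * π j) * (W k j' * π j')) * (∑ i, (u j i - u j' i)^2) = 0 := by
      intro k j j'
      have h5 := (Finset.sum_eq_zero_iff_of_nonneg (fun k _ => hDk_nonneg k)).mp hD0 k
        (Finset.mem_univ k)
      have h6 : ∑ j, ∑ j', ((W k j * π j) * (W k j' * π j')) * (∑ i, (u j i - u j' i)^2)
          = 0 := by
        rcases mul_eq_zero.mp h5 with h | h
        · exact absurd h (one_div_ne_zero (hπne k))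
        · rcases mul_eq_zero.mp h with h' | h'
          · norm_num at h'
          · exact h'
      have h7 := (Finset.sum_eq_zero_iff_of_nonneg (fun j _ => Finset.sum_nonneg
        fun j' _ => hterm_nonneg k j j')).mp h6 j (Finset.mem_univ j)
      exact (Finset.sum_eq_zero_iff_of_nonneg (fun j' _ => hterm_nonneg k j j')).mp h7 j'
        (Finset.mem_univ j')
    have hucons : ∀ k j, 0 < W k j → u j = u k := by
      intro k j hWkj
      have h6 := hterm0 k j k
      have hco : 0 < (W k j * π j) * (W k k * π k) :=
        mul_pos (mul_pos hWkj (hπ_pos j)) (mul_pos (hW_diag k) (hπ_pos k))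
      have h7 : ∑ i, (u j i - u k i)^2 = 0 := by
        rcases mul_eq_zero.mp h6 with h | h
        · exact absurd h hco.ne'
        · exact h
      funext i
      have h8 := (Finset.sum_eq_zero_iff_of_nonneg (fun i _ => sq_nonneg _)).mp h7 i
        (Finset.mem_univ i)
      have := (pow_eq_zero_iff two_ne_zero).mp h8
      linarith [this]
    have hall : ∀ a b : Fin n, u a = u b := by
      intro a b
      induction hW_conn a b with
      | refl => rfl
      | tail hs hedge ih => exact ih.trans (hucons _ _ hedge)
    set v : Fin d → ℝ := u ⟨0, hn⟩ with hv
    have hxj : ∀ j, x j = fun i => π j * v i := by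
      intro j
      funext i
      have h8 : u j i = v i := by rw [hall j ⟨0, hn⟩]
      have h8' : x j i / π j = v i := by rw [← hyx j]; exact h8
      rw [div_eq_iff (hπne j)] at h8'
      linarith [h8']
    have hAv : ∀ j, (A j).mulVec v = 0 := by
      intro j
      have h9 := hAx0 j
      rw [hxj j] at h9
      have h10 : (A j).mulVec (fun i => π j * v i) = π j • (A j).mulVec v := by
        rw [show (fun i => π j * v i) = π j • v from rfl, Matrix.mulVec_smul]
      rw [h10] at h9
      rcases smul_eq_zero.mp h9 with h | h
      · exact absurd h (hπne j)
      · exact h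
    have hv0 : v = 0 := by
      by_contra hvne
      have h9 := hAsum.dotProduct_mulVec_pos hvne
      have h11 : (∑ j, A j).mulVec v = 0 := by
        funext i
        show ∑ l, (∑ j, A j) i l * v l = 0
        have : ∀ l, (∑ j, A j) i l = ∑ j, A j i l := by
          intro l
          simp [Matrix.sum_apply]
        simp_rw [this, Finset.sum_mul]
        rw [Finset.sum_comm]
        have : ∀ j, ∑ l, A j i l * v l = 0 := by
          intro j
          have := congrFun (hAv j) i
          simpa [Matrix.mulVec, dotProduct] using this
        simp [this]
      rw [h11] at h9
      simp at h9
    apply hx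
    funext j i
    rw [hxj j, hv0]
    simp
  -- continuity
  have hNNcont : Continuous NN := by
    apply continuous_finset_sum
    intro k _
    apply Continuous.mul continuous_const
    apply continuous_finset_sum
    intro i _
    exact ((continuous_apply i).comp (continuous_apply k)).pow 2
  have hQQcont : Continuous QQ := by
    have hrw : QQ = fun x => ∑ k, (1 / π k) *
        (∑ i, (∑ j, W k j * (x j i - (α / (n * π j)) * (∑ l, A j i l * x j l))) ^ 2) := rfl
    rw [hrw]
    apply continuous_finset_sum
    intro k _
    apply Continuous.mul continuous_const
    apply continuous_finset_sum
    intro i _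
    apply Continuous.pow
    apply continuous_finset_sum
    intro j _
    apply Continuous.mul continuous_const
    apply Continuous.sub (continuous_apply_apply j i)
    apply Continuous.mul continuous_const
    apply continuous_finset_sum
    intro l _
    exact Continuous.mul continuous_const ((continuous_apply l).comp (continuous_apply j))
  -- the unit sphere for NN is compact and nonempty
  set S : Set (Fin n → Fin d → ℝ) := NN ⁻¹' {1} with hS
  have hScl : IsClosed S := isClosed_singleton.preimage hNNcont
  have hSbd : Bornology.IsBounded S := by
    refine (Metric.isBounded_closedBall (x := (0 : Fin n → Fin d → ℝ)) (r := 1)).subset ?_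
    intro x hxS
    have hx1 : NN x = 1 := hxS
    rw [Metric.mem_closedBall, dist_zero_right]
    rw [pi_norm_le_iff_of_nonneg zero_le_one]
    intro k
    rw [pi_norm_le_iff_of_nonneg zero_le_one]
    intro i
    rw [Real.norm_eq_abs, ← sq_le_one_iff_abs_le_one]
    have h1 : (1 / π k) * (∑ i, (x k i)^2) ≤ 1 := by
      have h0 : (1 / π k) * (∑ i, (x k i)^2) ≤ NN x :=
        Finset.single_le_sum (f := fun k => (1 / π k) * (∑ i, (x k i)^2))
          (fun k _ => mul_nonneg (one_div_pos.mpr (hπ_pos k)).le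
            (Finset.sum_nonneg fun i _ => sq_nonneg _)) (Finset.mem_univ k)
      rw [hx1] at h0
      exact h0
    have h2 : (x k i)^2 ≤ ∑ i, (x k i)^2 :=
      Finset.single_le_sum (f := fun i => (x k i)^2) (fun i _ => sq_nonneg _)
        (Finset.mem_univ i)
    have h3 : ∑ i, (x k i)^2 ≤ π k := by
      have h5 := mul_le_mul_of_nonneg_left h1 (hπ_pos k).le
      rw [mul_one] at h5
      calc ∑ i, (x k i)^2 = π k * ((1/π k) * ∑ i, (x k i)^2) := by
            rw [← mul_assoc, mul_one_div, div_self (hπne k), one_mul]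
        _ ≤ π k := h5
    have h4 : π k ≤ 1 := by
      rw [← hπ_sum]
      exact Finset.single_le_sum (fun k _ => (hπ_pos k).le) (Finset.mem_univ k)
    linarith
  have hScomp : IsCompact S := Metric.isCompact_of_isClosed_isBounded hScl hSbd
  have hSne : S.Nonempty := by
    refine ⟨fun k _ => Real.sqrt (π k / (n * d)), ?_⟩
    show NN _ = 1
    simp only [hNN]
    have : ∀ k : Fin n, (1 / π k) * (∑ _i : Fin d, (Real.sqrt (π k / (n * d)))^2)
        = 1 / n := by
      intro k
      rw [Finset.sum_const, Finset.card_univ, Fintype.card_fin, nsmul_eq_mul,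
        Real.sq_sqrt (div_nonneg (hπ_pos k).le (by positivity))]
      field_simp [hπne k]
    rw [Finset.sum_congr rfl fun k _ => this k, Finset.sum_const, Finset.card_univ,
      Fintype.card_fin, nsmul_eq_mul]
    field_simp
  obtain ⟨xm, hxmS, hxmax⟩ := hScomp.exists_isMaxOn hSne hQQcont.continuousOn
  set m : ℝ := QQ xm with hm
  have hxm1 : NN xm = 1 := hxmS
  have hxmne : xm ≠ 0 := by
    intro h0
    rw [h0] at hxm1
    have : NN 0 = 0 := by
      rw [hNN]
      simp
    rw [this] at hxm1
    norm_num at hxm1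
  have hm1 : m < 1 := by
    have := hstrict xm hxmne
    rw [hxm1] at this
    exact this
  -- homogeneity
  have hNN_smul : ∀ (c : ℝ) (x : Fin n → Fin d → ℝ), NN (c • x) = c^2 * NN x := by
    intro c x
    rw [hNN, Finset.mul_sum]
    refine Finset.sum_congr rfl fun k _ => ?_
    simp only [Pi.smul_apply, smul_eq_mul, mul_pow]
    rw [← Finset.mul_sum]
    ring
  have hQQ_smul : ∀ (c : ℝ) (x : Fin n → Fin d → ℝ), QQ (c • x) = c^2 * QQ x := by
    intro c x
    rw [hQQ, Finset.mul_sum]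
    refine Finset.sum_congr rfl fun k _ => ?_
    have e1 : ∀ i, (∑ j, W k j * ((c • x) j i - (α / (n * π j)) * (A j).mulVec ((c • x) j) i))
        = c * ∑ j, W k j * (x j i - (α / (n * π j)) * (A j).mulVec (x j) i) := by
      intro i
      rw [Finset.mul_sum]
      refine Finset.sum_congr rfl fun j _ => ?_
      have : (A j).mulVec ((c • x) j) = c • (A j).mulVec (x j) := by
        rw [show (c • x) j = c • (x j) from rfl, Matrix.mulVec_smul]
      rw [this]
      simp only [Pi.smul_apply, smul_eq_mul]
      ring
    rw [Finset.sum_congr rfl fun i _ => by rw [e1 i]]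
    simp only [mul_pow]
    rw [← Finset.mul_sum]
    ring
  -- final bound
  set η : ℝ := Real.sqrt (max m 0) with hη
  have hmax0 : (0:ℝ) ≤ max m 0 := le_max_right m 0
  refine ⟨η, ?_, ?_⟩
  · rw [hη, show (1:ℝ) = Real.sqrt 1 by simp]
    exact Real.sqrt_lt_sqrt hmax0 (by simpa using max_lt hm1 one_pos)
  · intro x
    have hkey2 : QQ x ≤ max m 0 * NN x := by
      by_cases hx0 : NN x = 0
      · have hx00 : x = 0 := hNN0 x hx0
        have : QQ x = 0 := by
          rw [hx00, hQQ]
          simp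
        rw [this, hx0, mul_zero]
      · have hpos : 0 < NN x := lt_of_le_of_ne (hNN_nonneg x) (Ne.symm hx0)
        set c : ℝ := (Real.sqrt (NN x))⁻¹ with hc
        have hc2 : c^2 * NN x = 1 := by
          rw [hc, ← Real.sqrt_inv, Real.sq_sqrt (inv_nonneg.mpr (hNN_nonneg x))]
          field_simp
        have hcS : c • x ∈ S := by
          show NN (c • x) = 1
          rw [hNN_smul, hc2]
        have h5 : QQ (c • x) ≤ m := hxmax hcS
        rw [hQQ_smul c x] at h5
        have hc2pos : 0 < c^2 := by
          rw [hc]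
          have : 0 < Real.sqrt (NN x) := Real.sqrt_pos.mpr hpos
          positivity
        have h6 : QQ x ≤ m / c^2 := by
          rw [le_div_iff₀ hc2pos]
          linarith [h5]
        have h7 : m / c^2 = m * NN x := by
          rw [eq_comm, mul_comm, ← div_eq_iff hc2pos.ne'] at hc2
          rw [← hc2]
          ring
        calc QQ x ≤ m * NN x := h7 ▸ h6
          _ ≤ max m 0 * NN x := mul_le_mul_of_nonneg_right (le_max_left m 0) hpos.le
    calc Real.sqrt (QQ x) ≤ Real.sqrt (max m 0 * NN x) := Real.sqrt_le_sqrt hkey2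
      _ = η * Real.sqrt (NN x) := by rw [Real.sqrt_mul hmax0, hη]
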